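/- Let H be a closed m-shift system for f, and let W be a set which locally divides H and which contains every minimal set of f that is contained in the core Z_0(H). Then there exists β < log m such that every periodic orbit P of f which is contained in the domain D(H) but not contained in W has virtual entropy at most β: ĥ(P) ≤ β. -/

import Mathlib

open Dynamics

/-- Discrete uniformity on `Fin m`, compatible with its discrete topology. -/
instance (m : ℕ) : UniformSpace (Fin m) := ⊥

/-- The one-sided shift map on `Σ_m = {1,…,m}^ℕ`, modelled as `ℕ → Fin m`. -/
def shiftMap (m : ℕ) : (ℕ → Fin m) → (ℕ → Fin m) := fun a n => a (n + 1)

variable {X : Type*}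

/-- `H = (H_1, …, H_m)` is an `m`-shift system for `f`: each `H i` is nonempty and
`f(H_i) ⊇ H_1 ∪ ⋯ ∪ H_m` for every `i`. -/
def IsShiftSystem (f : X → X) {m : ℕ} (H : Fin m → Set X) : Prop :=
  (∀ i, (H i).Nonempty) ∧ ∀ i, (⋃ j, H j) ⊆ f '' H i

/-- A closed `m`-shift system: an `m`-shift system all of whose sets are closed. -/
def IsClosedShiftSystem [TopologicalSpace X] (f : X → X) {m : ℕ} (H : Fin m → Set X) : Prop :=
  IsShiftSystem f H ∧ ∀ i, IsClosed (H i)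

/-- The itinerary set `It(x)` of a point `x`. -/
def itin (f : X → X) {m : ℕ} (H : Fin m → Set X) (x : X) : Set (ℕ → Fin m) :=
  {a | ∀ i : ℕ, f^[i] x ∈ H (a i)}

/-- The itinerary set `It(S) = ⋃_{x ∈ S} It(x)` of a subset `S ⊆ X`. -/
def itinSet (f : X → X) {m : ℕ} (H : Fin m → Set X) (S : Set X) : Set (ℕ → Fin m) :=
  ⋃ x ∈ S, itin f H x

/-- The `n`-itinerary set `It_n(x)` of a point `x`. -/
def itinN (f : X → X) {m : ℕ} (H : Fin m → Set X) (n : ℕ) (x : X) : Set (Fin n → Fin m) :=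
  {w | ∀ i : Fin n, f^[(i : ℕ)] x ∈ H (w i)}

/-- `A(n)`: the set of initial subwords of length `n` of elements of `A ⊆ Σ_m`. -/
def initWords {m : ℕ} (A : Set (ℕ → Fin m)) (n : ℕ) : Set (Fin n → Fin m) :=
  (fun (a : ℕ → Fin m) (i : Fin n) => a (i : ℕ)) '' A

/-- `π(w) = ⋂_{i<n} f^{-i}(H_{w_i})` for a finite word `w`. -/
def piWord (f : X → X) {m n : ℕ} (H : Fin m → Set X) (w : Fin n → Fin m) : Set X :=
  ⋂ i : Fin n, f^[(i : ℕ)] ⁻¹' H (w i)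

/-- `π(α) = ⋂_{i≥0} f^{-i}(H_{α_i})` for a sequence `α ∈ Σ_m`. -/
def piSeq (f : X → X) {m : ℕ} (H : Fin m → Set X) (α : ℕ → Fin m) : Set X :=
  ⋂ i : ℕ, f^[i] ⁻¹' H (α i)

/-- `π(A) = ⋃_{w ∈ A} π(w)` for a set `A` of `n`-words. -/
def piWordSet (f : X → X) {m n : ℕ} (H : Fin m → Set X) (A : Set (Fin n → Fin m)) : Set X :=
  ⋃ w ∈ A, piWord f H w

/-- `π(A) = ⋃_{α ∈ A} π(α)` for a set `A ⊆ Σ_m` of sequences. -/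
def piSeqSet (f : X → X) {m : ℕ} (H : Fin m → Set X) (A : Set (ℕ → Fin m)) : Set X :=
  ⋃ α ∈ A, piSeq f H α

/-- The center `C(H) = ⋂ i, H i`. -/
def centerSet {m : ℕ} (H : Fin m → Set X) : Set X := ⋂ i, H i

/-- The core `Z_0(H) = ⋂_{k≥0} f^{-k}(C(H))`. -/
def coreSet (f : X → X) {m : ℕ} (H : Fin m → Set X) : Set X :=
  ⋂ k : ℕ, f^[k] ⁻¹' centerSet H

/-- The domain `D(H) = ⋂_{k≥0} f^{-k}(ℍ)` where `ℍ = H_1 ∪ ⋯ ∪ H_m`. -/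
def domainSet (f : X → X) {m : ℕ} (H : Fin m → Set X) : Set X :=
  ⋂ k : ℕ, f^[k] ⁻¹' (⋃ j, H j)

/-- The kernel `Ker(H)`: points lying in at least two of the sets `H i`. -/
def kernelSet {m : ℕ} (H : Fin m → Set X) : Set X :=
  {x | ∃ i j, i ≠ j ∧ x ∈ H i ∧ x ∈ H j}

/-- The kernel of `H` is eventually countable: some image `f^j(Ker(H))` is countable. -/
def EventuallyCountableKernel (f : X → X) {m : ℕ} (H : Fin m → Set X) : Prop :=
  ∃ j : ℕ, (f^[j] '' kernelSet H).Countable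

/-- `H` is nontrivial: `H_i \ Z_0(H) ≠ ∅` for every `i`. -/
def IsNontrivialShiftSystem (f : X → X) {m : ℕ} (H : Fin m → Set X) : Prop :=
  ∀ i, (H i \ coreSet f H).Nonempty

/-- A minimal set of `f`: a nonempty closed invariant set with no proper nonempty closed
invariant subset. -/
def IsMinimalSet [TopologicalSpace X] (f : X → X) (M : Set X) : Prop :=
  M.Nonempty ∧ IsClosed M ∧ f '' M ⊆ M ∧
    ∀ M' : Set X, M' ⊆ M → M'.Nonempty → IsClosed M' → f '' M' ⊆ M' → M' = M

/-- A shift-minimal subset of `Σ_m`. -/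
def IsShiftMinimal {m : ℕ} (Γ : Set (ℕ → Fin m)) : Prop :=
  Γ.Nonempty ∧ IsClosed Γ ∧ shiftMap m '' Γ ⊆ Γ ∧
    ∀ Γ' : Set (ℕ → Fin m), Γ' ⊆ Γ → Γ'.Nonempty → IsClosed Γ' →
      shiftMap m '' Γ' ⊆ Γ' → Γ' = Γ

/-- A periodic orbit of `f`. -/
def IsPeriodicOrbit (f : X → X) (P : Set X) : Prop :=
  ∃ (x : X) (n : ℕ), 0 < n ∧ f^[n] x = x ∧ P = Set.range fun i => f^[i] x

/-- The virtual entropy `ĥ(S)`: the topological entropy of the shift restricted to `It(S)`. -/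
noncomputable def virtualEntropy (f : X → X) {m : ℕ} (H : Fin m → Set X) (S : Set X) : EReal :=
  coverEntropy (shiftMap m) (itinSet f H S)

/-- `W` locally divides the shift system `H`. -/
def LocallyDivides [TopologicalSpace X] (f : X → X) {m : ℕ} (H : Fin m → Set X)
    (W : Set X) : Prop :=
  f '' W ⊆ W ∧ (∀ i, (H i \ W).Nonempty) ∧
    ∃ Λ : Set (ℕ → Fin m), IsClosed Λ ∧ shiftMap m '' Λ ⊆ Λ ∧
      coverEntropy (shiftMap m) Λ < (Real.log m : EReal) ∧
      ∃ V ∈ nhdsSet W, ∀ (x : X) (n : ℕ), 1 ≤ n →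
        (∀ i < n, f^[i] x ∈ V \ W) → itinN f H n x ⊆ initWords Λ n

/-- The ω-limit set of `x` under `f`. -/
def omegaLimitSet [TopologicalSpace X] (f : X → X) (x : X) : Set X :=
  ⋂ N : ℕ, closure (Set.range fun n : ℕ => f^[N + n] x)

/-- `limsup` of a sequence of sets: `⋂_{k≥1} ⋃_{i≥k} A_i`. -/
def limsupSets {β : Type*} (A : ℕ → Set β) : Set β :=
  ⋂ k : ℕ, ⋃ i : ℕ, ⋃ _ : k ≤ i, A i




open Uniformity Filter

namespace Aux
variable {m : ℕ}

/-- basic cylinder entourage -/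
def cyl (m k : ℕ) : Set ((ℕ → Fin m) × (ℕ → Fin m)) := {p | ∀ j < k, p.1 j = p.2 j}

lemma cyl_mem_uniformity (m k : ℕ) : cyl m k ∈ 𝓤 (ℕ → Fin m) := by
  have h1 : ∀ j : ℕ, {p : (ℕ → Fin m) × (ℕ → Fin m) | p.1 j = p.2 j} ∈ 𝓤 (ℕ → Fin m) := by
    intro j
    rw [Pi.uniformity]
    refine Filter.mem_iInf_of_mem j ?_
    refine Filter.mem_comap.2 ⟨SetRel.id, ?_, ?_⟩
    · exact Filter.mem_principal_self _
    · intro p hp; exact hp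
  have : (⋂ j ∈ Finset.range k, {p : (ℕ → Fin m) × (ℕ → Fin m) | p.1 j = p.2 j}) ∈
      𝓤 (ℕ → Fin m) := (Filter.biInter_finset_mem _).2 fun j _ => h1 j
  refine Filter.mem_of_superset this ?_
  intro p hp j hj
  simp only [Set.mem_iInter] at hp
  exact hp j (Finset.mem_range.2 hj)

lemma exists_cyl_subset {U : Set ((ℕ → Fin m) × (ℕ → Fin m))} (hU : U ∈ 𝓤 (ℕ → Fin m)) :
    ∃ k, 1 ≤ k ∧ cyl m k ⊆ U := by
  rw [Pi.uniformity, Filter.mem_iInf] at hU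
  obtain ⟨I, hIfin, V, hV, rfl⟩ := hU
  have : ∃ k : ℕ, ∀ i ∈ I, i < k := by
    obtain ⟨b, hb⟩ := hIfin.bddAbove
    exact ⟨b + 1, fun i hi => Nat.lt_succ_of_le (hb hi)⟩
  obtain ⟨k, hk⟩ := this
  refine ⟨k + 1, le_add_self, fun p hp => ?_⟩
  refine Set.mem_iInter.2 fun i => ?_
  have := hV i
  rw [Filter.mem_comap] at this
  obtain ⟨t, ht, hsub⟩ := this
  have hid : SetRel.id ⊆ t := by rwa [show (𝓤 (Fin m)) = 𝓟 SetRel.id from rfl, Filter.mem_principal] at ht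
  apply hsub
  have : p.1 (i : ℕ) = p.2 (i : ℕ) := hp (i : ℕ) (Nat.lt_succ_of_lt (hk i i.2))
  simp only [Set.mem_preimage]
  exact hid (by simp [SetRel.id, this])

lemma shiftMap_iterate (a : ℕ → Fin m) (i t : ℕ) : (shiftMap m)^[i] a t = a (t + i) := by
  induction i generalizing a t with
  | zero => rfl
  | succ n ih =>
      rw [Function.iterate_succ_apply, ih]
      simp [shiftMap, Nat.add_comm, Nat.add_assoc, Nat.add_left_comm]

end Aux



namespace Aux
variable {m : ℕ}

open ENNReal EReal Filter Dynamics

lemma EReal_nat_mul_div_cancel {L : ℕ} (hL : 1 ≤ L) (x : EReal) :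
    ((L : EReal) * x) / (L : EReal) = x := by
  have hL0 : (L : EReal) ≠ 0 := by exact_mod_cast Nat.one_le_iff_ne_zero.1 hL
  rw [mul_comm, ← EReal.mul_div, EReal.div_self (natCast_ne_bot L) (natCast_ne_top L) hL0, mul_one]

lemma mem_dynEnt_cyl {k L : ℕ} (hk : 1 ≤ k) (hL : 1 ≤ L) {b y : ℕ → Fin m}
    (h : (b, y) ∈ dynEntourage (shiftMap m) (cyl m k) L) :
    ∀ t, t + 1 < L + k → b t = y t := by
  intro t ht
  have h' := mem_dynEntourage.1 h
  rcases Nat.lt_or_ge t L with h1 | h1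
  · have := h' t h1 0 hk
    simpa [shiftMap_iterate] using this
  · have := h' (L-1) (by omega) (t - (L-1)) (by omega)
    simp only [shiftMap_iterate] at this
    have e : t - (L-1) + (L-1) = t := by omega
    rwa [e] at this

lemma card_le_coverMincard (m : ℕ) (hm : 1 ≤ m) (L : ℕ) :
    ((m ^ L : ℕ) : ℕ∞) ≤ coverMincard (shiftMap m) Set.univ (cyl m 1) L := by
  by_cases htop : coverMincard (shiftMap m) Set.univ (cyl m 1) L = ⊤
  · rw [htop]; exact le_top
  obtain ⟨s, hs, hcard⟩ := (coverMincard_finite_iff _ _ _ _).1 (lt_of_le_of_ne le_top htop)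
  rw [← hcard]
  haveI : Nonempty (Fin m) := ⟨⟨0, hm⟩⟩
  classical
  have key : ∀ w : Fin L → Fin m, ∃ b ∈ s, ∀ i : Fin L, b (i : ℕ) = w i := by
    intro w
    set a : ℕ → Fin m := fun t => if h : t < L then w ⟨t, h⟩ else Classical.arbitrary _ with ha
    have := hs (Set.mem_univ a)
    obtain ⟨b, hbs, hball⟩ := this
    refine ⟨b, hbs, fun i => ?_⟩
    have hb : (a, b) ∈ dynEntourage (shiftMap m) (cyl m 1) L := hball
    have := mem_dynEnt_cyl le_rfl (by have := i.isLt; omega) hb (i : ℕ) (by have := i.isLt; omega)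
    rw [← this, ha]
    simp [i.2]
  choose g hg1 hg2 using key
  have hginj : Function.Injective fun w => (⟨g w, hg1 w⟩ : {b // b ∈ s}) := by
    intro w w' hww
    funext i
    rw [← hg2 w i, ← hg2 w' i]
    exact congrArg (fun b => (b : ℕ → Fin m) (i : ℕ)) (Subtype.ext_iff.1 hww) 
  calc ((m ^ L : ℕ) : ℕ∞) = (Fintype.card (Fin L → Fin m) : ℕ∞) := by
        simp
    _ ≤ (s.card : ℕ∞) := by
        have := Fintype.card_le_of_injective _ hginj
        simpa using (Nat.cast_le.2 this : ((Fintype.card (Fin L → Fin m)) : ℕ∞) ≤ _)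

lemma log_m_le_coverEntropy_univ (m : ℕ) (hm : 1 ≤ m) :
    (Real.log m : EReal) ≤ coverEntropy (shiftMap m) (Set.univ : Set (ℕ → Fin m)) := by
  refine le_trans ?_ (coverEntropyEntourage_le_coverEntropy (shiftMap m) _
    (cyl_mem_uniformity m 1))
  rw [coverEntropyEntourage]
  have hfreq : ∃ᶠ L in atTop, (Real.log m : EReal) ≤
      log (coverMincard (shiftMap m) Set.univ (cyl m 1) L) / (L : ℕ) := by
    apply Filter.Eventually.frequently
    filter_upwards [Filter.eventually_ge_atTop 1] with L hL
    have h1 : ((m ^ L : ℕ) : ℕ∞) ≤ coverMincard (shiftMap m) Set.univ (cyl m 1) L :=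
      card_le_coverMincard m hm L
    have h2 : log (((m ^ L : ℕ) : ℕ∞) : ℝ≥0∞) ≤
        log (coverMincard (shiftMap m) Set.univ (cyl m 1) L) :=
      log_monotone (ENat.toENNReal_le.2 h1)
    have h3 : log (((m ^ L : ℕ) : ℕ∞) : ℝ≥0∞) = (L : EReal) * Real.log m := by
      have : (((m ^ L : ℕ) : ℕ∞) : ℝ≥0∞) = ((m : ℝ≥0∞)) ^ L := by
        push_cast; rfl
      have hm0 : ((m : ℝ≥0∞)).toReal = (m : ℝ) := by simp
      rw [this, log_pow, log_pos_real' (by rw [hm0]; exact_mod_cast Nat.lt_of_lt_of_le Nat.zero_lt_one hm), hm0]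
    calc (Real.log m : EReal) = ((L : EReal) * Real.log m) / (L : EReal) :=
          (EReal_nat_mul_div_cancel hL _).symm
      _ ≤ _ := by
          rw [← h3]
          exact EReal.div_le_div_right_of_nonneg (by exact_mod_cast Nat.zero_le L) h2
  exact Filter.le_limsup_of_frequently_le hfreq

end Aux

namespace Aux
variable {m : ℕ}
open ENNReal EReal Filter Dynamics

lemma tendsto_of_prefix_eq {b : ℕ → (ℕ → Fin m)} {α : ℕ → Fin m}
    (h : ∀ n, ∀ t < n, b n t = α t) : Filter.Tendsto b Filter.atTop (nhds α) := by
  rw [Uniform.tendsto_nhds_right, Filter.tendsto_def]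
  intro U hU
  obtain ⟨k, -, hku⟩ := exists_cyl_subset hU
  filter_upwards [Filter.eventually_ge_atTop (k+1)] with n hn
  refine hku (fun j hj => ?_)
  exact (h n j (by omega)).symm

lemma exists_notfull_initWords {Λ : Set (ℕ → Fin m)} (hm : 1 ≤ m) (hcl : IsClosed Λ)
    (hent : coverEntropy (shiftMap m) Λ < (Real.log m : EReal)) :
    ∃ n₁, 1 ≤ n₁ ∧ initWords Λ n₁ ≠ Set.univ := by
  by_contra hcon
  push_neg at hcon
  have hfull : Λ = Set.univ := by
    refine Set.eq_univ_of_forall fun α => ?_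
    have hchoice : ∀ n : ℕ, ∃ b ∈ Λ, ∀ t < n, b t = α t := by
      intro n
      have h1 := hcon (n+1) (by omega)
      have : (fun (i : Fin (n+1)) => α (i : ℕ)) ∈ initWords Λ (n+1) := h1 ▸ Set.mem_univ _
      obtain ⟨b, hb, hbα⟩ := this
      exact ⟨b, hb, fun t ht => congrFun hbα ⟨t, by omega⟩⟩
    choose b hbΛ hbα using hchoice
    exact hcl.mem_of_tendsto (tendsto_of_prefix_eq hbα)
      (Filter.Eventually.of_forall hbΛ)
  rw [hfull] at hent
  exact absurd (log_m_le_coverEntropy_univ m hm) (not_le.2 hent)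

/-- Construct a dynamical cover from representatives of initial words. -/
lemma isDynCoverOf_initWords (hm : 1 ≤ m) (A : Set (ℕ → Fin m)) (k L : ℕ) :
    ∃ s : Finset (ℕ → Fin m), IsDynCoverOf (shiftMap m) A (cyl m k) L s ∧
      s.card ≤ (initWords A (L + k)).ncard := by
  haveI : Nonempty (Fin m) := ⟨⟨0, hm⟩⟩
  classical
  set I := initWords A (L + k) with hI
  have hIfin : I.Finite := Set.toFinite _
  have hchoice : ∀ w : Fin (L+k) → Fin m, w ∈ I → ∃ a ∈ A, ∀ i : Fin (L+k), a (i:ℕ) = w i := by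
    intro w hw
    obtain ⟨a, ha, haw⟩ := hw
    exact ⟨a, ha, fun i => congrFun haw i⟩
  choose! rep hrepA hrepw using hchoice
  refine ⟨hIfin.toFinset.image rep, ?_, ?_⟩
  · intro a ha
    set w : Fin (L+k) → Fin m := fun i => a (i:ℕ) with hw
    have hwI : w ∈ I := ⟨a, ha, rfl⟩
    refine ⟨rep w, Finset.mem_image_of_mem rep (hIfin.mem_toFinset.2 hwI), ?_⟩
    have hprefix : ∀ t < L + k, rep w t = a t := by
      intro t ht
      have := hrepw w hwI ⟨t, ht⟩
      simpa [hw] using this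
    show (a, rep w) ∈ dynEntourage (shiftMap m) (cyl m k) L
    rw [mem_dynEntourage]
    intro i hi j hj
    simp only [shiftMap_iterate]
    exact (hprefix (j + i) (by omega)).symm
  · calc (hIfin.toFinset.image rep).card ≤ hIfin.toFinset.card := Finset.card_image_le
      _ = I.ncard := (Set.ncard_eq_toFinset_card I hIfin).symm

/-- Upper bound for cover entropy from counting initial words. -/
lemma coverEntropy_le_of_initWords_card {A : Set (ℕ → Fin m)} (hm : 1 ≤ m)
    {K L₀ B : ℕ} (hK : 1 ≤ K) (hB : 1 ≤ B) (hL₀ : 1 ≤ L₀)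
    (hcard : ∀ L, (initWords A L).ncard ≤ K * B ^ (L / L₀))
    {β : ℝ} (hβ : Real.log B / L₀ < β) :
    coverEntropy (shiftMap m) A ≤ (β : EReal) := by
  refine iSup₂_le fun U hU => ?_
  obtain ⟨k, hk1, hkU⟩ := exists_cyl_subset hU
  refine le_trans (coverEntropyEntourage_antitone (shiftMap m) A hkU) ?_
  have hCE : coverEntropyEntourage (shiftMap m) A (cyl m k) = atTop.limsup
      (fun L : ℕ => log (coverMincard (shiftMap m) A (cyl m k) L) / (L : ℕ)) := rfl
  show coverEntropyEntourage (shiftMap m) A (cyl m k) ≤ (β : EReal)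
  rw [hCE]
  -- choose L₁ beyond which the estimate holds
  have hε : 0 < β - Real.log B / L₀ := by linarith
  obtain ⟨L₁, hL₁⟩ := exists_nat_ge ((Real.log K + ((k : ℝ) / L₀ + 1) * Real.log B)
    / (β - Real.log B / L₀))
  apply Filter.limsup_le_of_le
  · isBoundedDefault
  filter_upwards [Filter.eventually_ge_atTop (max 1 (L₁ + 1))] with L hL
  have hL1 : 1 ≤ L := le_trans (le_max_left _ _) hL
  have hLL₁ : (L₁ : ℝ) < (L : ℝ) := by
    have : L₁ + 1 ≤ L := le_trans (le_max_right _ _) hL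
    exact_mod_cast this
  -- the cover bound
  obtain ⟨s, hs, hscard⟩ := isDynCoverOf_initWords hm A k L
  set N : ℕ := K * B ^ ((L + k) / L₀) with hN
  have hmin : coverMincard (shiftMap m) A (cyl m k) L ≤ (N : ℕ∞) := by
    refine le_trans hs.coverMincard_le_card ?_
    exact_mod_cast le_trans hscard (hcard (L + k))
  have hN1 : 1 ≤ N := Nat.one_le_iff_ne_zero.2
    (Nat.mul_ne_zero (by omega) (pow_ne_zero _ (by omega)))
  -- real logarithm estimate
  have hlogB : (0:ℝ) ≤ Real.log B := Real.log_nonneg (by exact_mod_cast hB)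
  have hreal : Real.log N ≤ β * L := by
    have h1 : Real.log N = Real.log K + (((L + k) / L₀ : ℕ) : ℝ) * Real.log B := by
      rw [hN, Nat.cast_mul, Real.log_mul (by positivity) (by positivity), Nat.cast_pow,
        Real.log_pow]
    have h2 : (((L + k) / L₀ : ℕ) : ℝ) ≤ (L : ℝ) / (L₀ : ℝ) + ((k : ℝ) / (L₀ : ℝ) + 1) := by
      refine le_trans (Nat.cast_div_le) ?_
      rw [Nat.cast_add, add_div]
      linarith
    have h3 : Real.log K + ((k : ℝ) / L₀ + 1) * Real.log B ≤ L * (β - Real.log B / L₀) := by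
      have := (div_le_iff₀ hε).1 (hL₁.trans hLL₁.le)
      linarith
    have h4 : (((L + k) / L₀ : ℕ) : ℝ) * Real.log B ≤
        ((L : ℝ) / L₀ + ((k : ℝ) / L₀ + 1)) * Real.log B :=
      mul_le_mul_of_nonneg_right h2 hlogB
    have h5 : ((L:ℝ)/L₀) * Real.log B = (Real.log B / L₀) * L := by ring
    calc Real.log N = Real.log K + (((L + k) / L₀ : ℕ) : ℝ) * Real.log B := h1
      _ ≤ Real.log K + ((L : ℝ) / L₀ + ((k : ℝ) / L₀ + 1)) * Real.log B := by linarith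
      _ = (Real.log B / L₀) * L + (Real.log K + ((k:ℝ)/L₀ + 1) * Real.log B) := by ring
      _ ≤ (Real.log B / L₀) * L + L * (β - Real.log B / L₀) := by linarith
      _ = β * L := by ring
  -- transfer to EReal
  have hlog : log (coverMincard (shiftMap m) A (cyl m k) L) ≤ (Real.log N : EReal) := by
    refine le_trans (log_monotone (ENat.toENNReal_le.2 hmin)) ?_
    have : ((N : ℕ∞) : ℝ≥0∞) = ((N : ℝ≥0∞)) := by push_cast; rfl
    rw [this, log_pos_real' (by rw [ENNReal.toReal_natCast]; exact_mod_cast hN1)]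
    rw [ENNReal.toReal_natCast]
  refine le_trans (EReal.div_le_div_right_of_nonneg (by exact_mod_cast Nat.zero_le L) hlog) ?_
  rw [show ((L : ℕ) : EReal) = ((L : ℝ) : EReal) by norm_cast]
  rw [EReal.div_le_iff_le_mul (by exact_mod_cast Nat.lt_of_lt_of_le Nat.zero_lt_one hL1)
    (by exact EReal.coe_ne_top _)]
  exact_mod_cast (by linarith : Real.log (N:ℝ) ≤ (L:ℝ) * β)

end Aux

namespace Aux
open Filter

lemma exists_minimalSet_subset {X : Type*} [TopologicalSpace X] [CompactSpace X] {f : X → X}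
    (hf : Continuous f) {F : Set X} (hcl : IsClosed F) (hne : F.Nonempty) (hinv : f '' F ⊆ F) :
    ∃ M, M ⊆ F ∧ IsMinimalSet f M := by
  set S : Set (Set X) := {A | A ⊆ F ∧ A.Nonempty ∧ IsClosed A ∧ f '' A ⊆ A} with hS
  have hchain : ∀ c ⊆ S, IsChain (· ⊆ ·) c → c.Nonempty → ∃ lb ∈ S, ∀ s ∈ c, lb ⊆ s := by
    intro c hcS hchain hcne
    refine ⟨⋂₀ c, ⟨?_, ?_, ?_, ?_⟩, fun s hs => Set.sInter_subset_of_mem hs⟩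
    · obtain ⟨A, hA⟩ := hcne
      exact (Set.sInter_subset_of_mem hA).trans (hcS hA).1
    · haveI : Nonempty c := hcne.to_subtype
      refine IsCompact.nonempty_sInter_of_directed_nonempty_isCompact_isClosed ?_ ?_ ?_ ?_
      · intro A hA B hB
        rcases hchain.total hA hB with h | h
        · exact ⟨A, hA, subset_rfl, h⟩
        · exact ⟨B, hB, h, subset_rfl⟩
      · exact fun A hA => (hcS hA).2.1
      · exact fun A hA => (hcS hA).2.2.1.isCompact
      · exact fun A hA => (hcS hA).2.2.1
    · exact isClosed_sInter fun A hA => (hcS hA).2.2.1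
    · intro y hy
      obtain ⟨x, hx, rfl⟩ := hy
      refine Set.mem_sInter.2 fun A hA => ?_
      exact (hcS hA).2.2.2 ⟨x, Set.mem_sInter.1 hx A hA, rfl⟩
  obtain ⟨M, -, hMS, hMmin⟩ := zorn_superset_nonempty S hchain F ⟨subset_rfl, hne, hcl, hinv⟩
  refine ⟨M, hMS.1, hMS.2.1, hMS.2.2.1, hMS.2.2.2, fun M' hM'M hM'ne hM'cl hM'inv => ?_⟩
  exact subset_antisymm hM'M (hMmin ⟨hM'M.trans hMS.1, hM'ne, hM'cl, hM'inv⟩ hM'M)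


lemma window_dichotomy {X : Type*} [MetricSpace X] [CompactSpace X] {f : X → X}
    (hf : Continuous f) {m : ℕ} {H : Fin m → Set X} (hHcl : ∀ i, IsClosed (H i))
    {W V : Set X} (hVopen : IsOpen V) (hWV : W ⊆ V)
    (hmin : ∀ M : Set X, IsMinimalSet f M → M ⊆ coreSet f H → M ⊆ W)
    {n₁ : ℕ} (hn₁ : 1 ≤ n₁) :
    ∃ N₂ : ℕ, ∀ z : X,
      (∃ j ≤ N₂, f^[j] z ∉ centerSet H) ∨
      (∃ k, k + n₁ ≤ N₂ + 1 ∧ ∀ i < n₁, f^[k + i] z ∈ V) := by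
  have hCcl : IsClosed (centerSet H) := isClosed_iInter hHcl
  by_contra hcon
  push_neg at hcon
  have hz : ∀ N : ℕ, ∃ z : X, (∀ j ≤ N, f^[j] z ∈ centerSet H) ∧
      ∀ k, k + n₁ ≤ N + 1 → ∃ i < n₁, f^[k + i] z ∉ V := hcon
  choose z hz1 hz2 using hz
  obtain ⟨y, -, φ, hφmono, hφtends⟩ := isCompact_univ.tendsto_subseq
    (fun n => (Set.mem_univ (z n)))
  have hiter : ∀ j : ℕ, Tendsto (fun i => f^[j] (z (φ i))) atTop (nhds (f^[j] y)) :=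
    fun j => ((hf.iterate j).continuousAt).tendsto.comp hφtends
  have hyC : ∀ j, f^[j] y ∈ centerSet H := by
    intro j
    refine hCcl.mem_of_tendsto (hiter j) ?_
    filter_upwards [Filter.eventually_ge_atTop j] with i hi
    exact hz1 (φ i) j (hi.trans (hφmono.le_apply))
  have hyV : ∀ k, ∃ i < n₁, f^[k + i] y ∉ V := by
    intro k
    by_contra hcon2
    push_neg at hcon2
    have hall : ∀ᶠ l in atTop, ∀ i < n₁, f^[k + i] (z (φ l)) ∈ V := by
      have h0 : ∀ i ∈ Set.Iio n₁, ∀ᶠ l in atTop, f^[k + i] (z (φ l)) ∈ V := fun i hi =>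
        (hiter (k + i)).eventually (eventually_mem_nhds_iff.2 ((hVopen.mem_nhds (hcon2 i hi)))) |>.mono fun l hl => mem_of_mem_nhds hl
      exact ((Filter.eventually_all_finite (Set.finite_Iio n₁)).2 h0).mono
        fun l hl i hi => hl i hi
    have hbig : ∀ᶠ l in atTop, k + n₁ ≤ φ l + 1 := by
      filter_upwards [Filter.eventually_ge_atTop (k + n₁)] with l hl
      have h : l ≤ φ l := hφmono.le_apply
      omega
    obtain ⟨l, hl1, hl2⟩ := (hall.and hbig).exists
    obtain ⟨i, hi, hiV⟩ := hz2 (φ l) k hl2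
    exact hiV (hl1 i hi)
  -- the invariant compact set of "core points oscillating out of V"
  set F : Set X := (⋂ j : ℕ, f^[j] ⁻¹' centerSet H) ∩
      ⋂ k : ℕ, ⋃ i ∈ Finset.range n₁, f^[k + i] ⁻¹' Vᶜ with hF
  have hyF : y ∈ F := by
    constructor
    · exact Set.mem_iInter.2 fun j => hyC j
    · refine Set.mem_iInter.2 fun k => ?_
      obtain ⟨i, hi, hiV⟩ := hyV k
      exact Set.mem_biUnion (Finset.mem_range.2 hi) hiV
  have hFcl : IsClosed F := by
    refine IsClosed.inter (isClosed_iInter fun j => (hCcl.preimage (hf.iterate j))) ?_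
    refine isClosed_iInter fun k => ?_
    refine isClosed_biUnion_finset fun i _ => ?_
    exact (hVopen.isClosed_compl).preimage (hf.iterate (k + i))
  have hFinv : f '' F ⊆ F := by
    rintro - ⟨w, ⟨hw1, hw2⟩, rfl⟩
    constructor
    · refine Set.mem_iInter.2 fun j => ?_
      have := Set.mem_iInter.1 hw1 (j + 1)
      simpa [Function.iterate_succ_apply] using this
    · refine Set.mem_iInter.2 fun k => ?_
      have := Set.mem_iInter.1 hw2 (k + 1)
      simp only [Set.mem_iUnion, Set.mem_preimage, Finset.mem_range, exists_prop] at this ⊢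
      obtain ⟨i, hi, hiV⟩ := this
      refine ⟨i, hi, ?_⟩
      have e : f^[k + i] (f w) = f^[k + 1 + i] w := by
        rw [← Function.iterate_succ_apply]
        congr 1
        omega
      rwa [e]
  obtain ⟨M, hMF, hMmin⟩ := exists_minimalSet_subset hf hFcl ⟨y, hyF⟩ hFinv
  have hMcore : M ⊆ coreSet f H := by
    intro w hw
    exact Set.mem_iInter.2 fun j => Set.mem_iInter.1 (hMF hw).1 j
  have hMW : M ⊆ W := hmin M hMmin hMcore
  obtain ⟨w, hw⟩ := hMmin.1
  have hMinv : Set.MapsTo f M M := fun x hx => hMmin.2.2.1 ⟨x, hx, rfl⟩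
  have := Set.mem_iInter.1 (hMF hw).2 0
  simp only [Set.mem_iUnion, Set.mem_preimage, Finset.mem_range, exists_prop] at this
  obtain ⟨i, hi, hiV⟩ := this
  have : f^[0 + i] w ∈ M := (hMinv.iterate (0 + i)) hw
  exact hiV (hWV (hMW this))

end Aux

namespace Aux
open Filter


end Aux

namespace Aux
open Filter

variable {X : Type*} {f : X → X} {m : ℕ} {H : Fin m → Set X}

lemma card_itinN_split (z : X) (a b : ℕ) :
    Nat.card (itinN f H (a + b) z) ≤
      Nat.card (itinN f H a z) * Nat.card (itinN f H b (f^[a] z)) := by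
  classical
  set Φ : (Fin (a + b) → Fin m) → (Fin a → Fin m) × (Fin b → Fin m) :=
    fun w => (fun i => w (Fin.castAdd b i), fun i => w (Fin.natAdd a i)) with hΦ
  have hmaps : ∀ w ∈ itinN f H (a + b) z,
      Φ w ∈ (itinN f H a z) ×ˢ (itinN f H b (f^[a] z)) := by
    intro w hw
    constructor
    · intro i
      have := hw (Fin.castAdd b i)
      simpa using this
    · intro i
      have := hw (Fin.natAdd a i)
      simp only [Fin.coe_natAdd] at this
      have e : f^[(i : ℕ)] (f^[a] z) = f^[a + (i : ℕ)] z := by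
        rw [Nat.add_comm, Function.iterate_add_apply]
      rw [hΦ]
      simpa [e] using this
  have hinj : Function.Injective Φ := by
    intro w w' hww
    funext i
    refine Fin.addCases (fun j => ?_) (fun j => ?_) i
    · exact congrFun (congrArg Prod.fst hww) j
    · exact congrFun (congrArg Prod.snd hww) j
  calc Nat.card (itinN f H (a + b) z)
      = (itinN f H (a + b) z).ncard := (Nat.card_coe_set_eq _)
    _ ≤ ((itinN f H a z) ×ˢ (itinN f H b (f^[a] z))).ncard := by
        exact Set.ncard_le_ncard_of_injOn Φ hmaps (hinj.injOn) (Set.toFinite _)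
    _ = Nat.card ((itinN f H a z) ×ˢ (itinN f H b (f^[a] z)) : Set _) :=
        (Nat.card_coe_set_eq _).symm
    _ = Nat.card (itinN f H a z) * Nat.card (itinN f H b (f^[a] z)) := by
        rw [Nat.card_congr (Equiv.Set.prod _ _), Nat.card_prod]

lemma card_itinN_le_pow (z : X) (L : ℕ) : Nat.card (itinN f H L z) ≤ m ^ L := by
  calc Nat.card (itinN f H L z) = (itinN f H L z).ncard := Nat.card_coe_set_eq _
    _ ≤ (Set.univ : Set (Fin L → Fin m)).ncard :=
        Set.ncard_le_ncard (Set.subset_univ _) (Set.toFinite _)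
    _ = m ^ L := by rw [Set.ncard_univ]; simp

lemma card_itinN_one_le (hm : 1 ≤ m) {z : X} (hz : z ∉ centerSet H) :
    Nat.card (itinN f H 1 z) ≤ m - 1 := by
  classical
  have : ∃ a₀ : Fin m, z ∉ H a₀ := by
    by_contra hc
    push_neg at hc
    exact hz (Set.mem_iInter.2 hc)
  obtain ⟨a₀, ha₀⟩ := this
  have hmaps : ∀ w ∈ itinN f H 1 z, w 0 ∈ ({a₀}ᶜ : Set (Fin m)) := by
    intro w hw
    have := hw 0
    simp only [Fin.val_zero, Function.iterate_zero, id_eq] at this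
    intro he
    rw [Set.mem_singleton_iff.1 he] at this
    exact ha₀ this
  have hinj : Set.InjOn (fun w : Fin 1 → Fin m => w 0) (itinN f H 1 z) := by
    intro w _ w' _ h
    funext i
    have : i = 0 := Subsingleton.elim _ _
    rw [this]; exact h
  calc Nat.card (itinN f H 1 z) = (itinN f H 1 z).ncard := Nat.card_coe_set_eq _
    _ ≤ (({a₀}ᶜ : Set (Fin m))).ncard :=
        Set.ncard_le_ncard_of_injOn _ hmaps hinj (Set.toFinite _)
    _ = m - 1 := by
        rw [Set.compl_eq_univ_diff, Set.ncard_diff (Set.subset_univ _), Set.ncard_univ,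
          Set.ncard_singleton]
        simp

end Aux

namespace Aux
open Filter

variable {X : Type*} {f : X → X} {m : ℕ} {H : Fin m → Set X}

lemma card_itinN_window (hm : 1 ≤ m) {L₀ B : ℕ} (hL₀ : 1 ≤ L₀) (z : X)
    (hwin : ∀ t : ℕ, Nat.card (itinN f H L₀ (f^[t] z)) ≤ B) :
    ∀ L, Nat.card (itinN f H L z) ≤ B ^ (L / L₀) * m ^ L₀ := by
  have hq : ∀ q, Nat.card (itinN f H (q * L₀) z) ≤ B ^ q := by
    intro q
    induction q with
    | zero =>
        have h0 := card_itinN_le_pow (f := f) (H := H) z 0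
        rw [Nat.zero_mul, pow_zero]
        simpa using h0
    | succ q ih =>
        have e : (q + 1) * L₀ = q * L₀ + L₀ := by ring
        rw [e]
        calc Nat.card (itinN f H (q * L₀ + L₀) z)
            ≤ Nat.card (itinN f H (q * L₀) z) * Nat.card (itinN f H L₀ (f^[q * L₀] z)) :=
              card_itinN_split z _ _
          _ ≤ B ^ q * B := Nat.mul_le_mul ih (hwin (q * L₀))
          _ = B ^ (q + 1) := by ring
  intro L
  have e : L = (L / L₀) * L₀ + L % L₀ := by
    rw [Nat.mul_comm, Nat.div_add_mod]
  calc Nat.card (itinN f H L z)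
      = Nat.card (itinN f H ((L / L₀) * L₀ + L % L₀) z) := by rw [← e]
    _ ≤ Nat.card (itinN f H ((L / L₀) * L₀) z) *
          Nat.card (itinN f H (L % L₀) (f^[(L / L₀) * L₀] z)) := card_itinN_split z _ _
    _ ≤ B ^ (L / L₀) * m ^ (L % L₀) := Nat.mul_le_mul (hq _) (card_itinN_le_pow _ _)
    _ ≤ B ^ (L / L₀) * m ^ L₀ :=
        Nat.mul_le_mul_left _ (Nat.pow_le_pow_right hm (le_of_lt (Nat.mod_lt _ hL₀)))

lemma exists_window_bound {X : Type*} [MetricSpace X] [CompactSpace X] {f : X → X}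
    (hf : Continuous f) {m : ℕ} (hm2 : 2 ≤ m) {H : Fin m → Set X} (hHcl : ∀ i, IsClosed (H i))
    {W V : Set X} (hVopen : IsOpen V) (hWV : W ⊆ V)
    (hmin : ∀ M : Set X, IsMinimalSet f M → M ⊆ coreSet f H → M ⊆ W)
    {Λ : Set (ℕ → Fin m)}
    (hcond : ∀ (x : X) (n : ℕ), 1 ≤ n → (∀ i < n, f^[i] x ∈ V \ W) →
      itinN f H n x ⊆ initWords Λ n)
    {n₁ : ℕ} (hn₁ : 1 ≤ n₁) (hwords : initWords Λ n₁ ≠ Set.univ) :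
    ∃ L₀ B : ℕ, 1 ≤ L₀ ∧ 1 ≤ B ∧ B < m ^ L₀ ∧
      ∀ z : X, (∀ j : ℕ, f^[j] z ∉ W) → Nat.card (itinN f H L₀ z) ≤ B := by
  classical
  set K₁ := (initWords Λ n₁).ncard with hK₁def
  have hK₁ : K₁ < m ^ n₁ := by
    have h1 : (initWords Λ n₁) ⊂ Set.univ := (Set.ssubset_univ_iff).2 hwords
    calc K₁ < (Set.univ : Set (Fin n₁ → Fin m)).ncard := Set.ncard_lt_ncard h1 (Set.toFinite _)
      _ = m ^ n₁ := by rw [Set.ncard_univ]; simp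
  obtain ⟨N₀, hN₀⟩ := window_dichotomy hf hHcl hVopen hWV hmin hn₁
  set N₂ := max N₀ n₁ with hN₂def
  set L₀ := N₂ + 1 with hL₀def
  set B := max ((m - 1) * m ^ N₂) (K₁ * m ^ (L₀ - n₁)) with hBdef
  have hB1 : 1 ≤ B := by
    refine le_trans ?_ (le_max_left _ _)
    have h1 : 1 ≤ m - 1 := by omega
    have h2 : 1 ≤ m ^ N₂ := Nat.one_le_pow _ _ (by omega)
    simpa using Nat.mul_le_mul h1 h2
  have hBlt : B < m ^ L₀ := by
    apply max_lt
    · have h1 : (m - 1) * m ^ N₂ < m * m ^ N₂ :=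
        Nat.mul_lt_mul_of_pos_right (by omega) (Nat.pow_pos (by omega))
      calc (m - 1) * m ^ N₂ < m * m ^ N₂ := h1
        _ = m ^ L₀ := by rw [hL₀def, pow_succ, Nat.mul_comm]
    · have h2 : K₁ * m ^ (L₀ - n₁) < m ^ n₁ * m ^ (L₀ - n₁) :=
        Nat.mul_lt_mul_of_pos_right hK₁ (Nat.pow_pos (by omega))
      calc K₁ * m ^ (L₀ - n₁) < m ^ n₁ * m ^ (L₀ - n₁) := h2
        _ = m ^ L₀ := by
            rw [← pow_add]
            congr 1
            have : n₁ ≤ N₂ := le_max_right _ _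
            omega
  refine ⟨L₀, B, by omega, hB1, hBlt, ?_⟩
  intro z hzW
  rcases hN₀ z with ⟨j, hj, hjC⟩ | ⟨k, hk, hkV⟩
  · -- a non-center point in the window
    have hjN₂ : j ≤ N₂ := le_trans hj (le_max_left _ _)
    have hd : L₀ = j + (1 + (N₂ - j)) := by omega
    rw [hd]
    have hpow : m ^ j * m ^ (N₂ - j) = m ^ N₂ := by
      rw [← pow_add]; congr 1; omega
    calc Nat.card (itinN f H (j + (1 + (N₂ - j))) z)
        ≤ Nat.card (itinN f H j z) * Nat.card (itinN f H (1 + (N₂ - j)) (f^[j] z)) :=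
          card_itinN_split z _ _
      _ ≤ m ^ j * (Nat.card (itinN f H 1 (f^[j] z)) *
            Nat.card (itinN f H (N₂ - j) (f^[1] (f^[j] z)))) :=
          Nat.mul_le_mul (card_itinN_le_pow _ _) (card_itinN_split _ _ _)
      _ ≤ m ^ j * ((m - 1) * m ^ (N₂ - j)) :=
          Nat.mul_le_mul_left _
            (Nat.mul_le_mul (card_itinN_one_le (by omega) hjC) (card_itinN_le_pow _ _))
      _ = (m - 1) * m ^ N₂ := by rw [← hpow]; ring
      _ ≤ B := le_max_left _ _
  · -- a V-run of length n₁ in the window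
    have hsub : itinN f H n₁ (f^[k] z) ⊆ initWords Λ n₁ := by
      apply hcond _ _ hn₁
      intro i hi
      have e : f^[i] (f^[k] z) = f^[k + i] z := by
        rw [Nat.add_comm k i, Function.iterate_add_apply]
      rw [e]
      exact ⟨hkV i hi, hzW (k + i)⟩
    have hmid : Nat.card (itinN f H n₁ (f^[k] z)) ≤ K₁ := by
      rw [hK₁def]
      calc Nat.card (itinN f H n₁ (f^[k] z)) = (itinN f H n₁ (f^[k] z)).ncard :=
            Nat.card_coe_set_eq _
        _ ≤ (initWords Λ n₁).ncard := Set.ncard_le_ncard hsub (Set.toFinite _)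
    have hkL : k + n₁ ≤ L₀ := by omega
    have hd : L₀ = k + (n₁ + (L₀ - n₁ - k)) := by omega
    have hpow : m ^ k * m ^ (L₀ - n₁ - k) = m ^ (L₀ - n₁) := by
      rw [← pow_add]; congr 1; omega
    rw [hd]
    calc Nat.card (itinN f H (k + (n₁ + (L₀ - n₁ - k))) z)
        ≤ Nat.card (itinN f H k z) *
            Nat.card (itinN f H (n₁ + (L₀ - n₁ - k)) (f^[k] z)) := card_itinN_split z _ _
      _ ≤ m ^ k * (Nat.card (itinN f H n₁ (f^[k] z)) *
            Nat.card (itinN f H (L₀ - n₁ - k) (f^[n₁] (f^[k] z)))) :=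
          Nat.mul_le_mul (card_itinN_le_pow _ _) (card_itinN_split _ _ _)
      _ ≤ m ^ k * (K₁ * m ^ (L₀ - n₁ - k)) :=
          Nat.mul_le_mul_left _ (Nat.mul_le_mul hmid (card_itinN_le_pow _ _))
      _ = K₁ * m ^ (L₀ - n₁) := by rw [← hpow]; ring
      _ ≤ B := le_max_right _ _

end Aux

namespace Aux
open Filter

variable {X : Type*} {f : X → X}

lemma iterate_periodic_add_mul {x₀ : X} {n : ℕ} (hper : f^[n] x₀ = x₀) (c s : ℕ) :
    f^[s + c * n] x₀ = f^[s] x₀ := by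
  induction c with
  | zero => simp
  | succ c ih =>
      have e : s + (c + 1) * n = (s + c * n) + n := by ring
      rw [e, Function.iterate_add_apply, hper, ih]

lemma iterate_periodic_mod {x₀ : X} {n : ℕ} (hn : 0 < n) (hper : f^[n] x₀ = x₀) (s : ℕ) :
    f^[s] x₀ = f^[s % n] x₀ := by
  conv_lhs => rw [← Nat.mod_add_div' s n]
  rw [iterate_periodic_add_mul hper]

lemma periodic_avoids_W {W : Set X} (hWinv : f '' W ⊆ W) {x₀ : X} {n : ℕ} (hn : 0 < n)
    (hper : f^[n] x₀ = x₀) (hns : ¬ Set.range (fun i : ℕ => f^[i] x₀) ⊆ W) :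
    ∀ t : ℕ, f^[t] x₀ ∉ W := by
  intro t ht
  have h1 : ∀ k, f^[t + k] x₀ ∈ W := by
    intro k
    induction k with
    | zero => simpa using ht
    | succ k ih =>
        have e : f^[t + (k + 1)] x₀ = f (f^[t + k] x₀) := by
          have e2 : t + (k + 1) = (t + k) + 1 := by omega
          rw [e2, Function.iterate_succ_apply']
        rw [e]
        exact hWinv ⟨_, ih, rfl⟩
  apply hns
  rintro - ⟨s, rfl⟩
  show f^[s] x₀ ∈ W
  have htn : t ≤ t * n := Nat.le_mul_of_pos_right t hn
  have e : f^[s] x₀ = f^[t + (s + t * n - t)] x₀ := by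
    have e2 : t + (s + t * n - t) = s + t * n := by omega
    rw [e2, iterate_periodic_add_mul hper]
  rw [e]
  exact h1 _

lemma periodic_isMinimalSet [TopologicalSpace X] [T1Space X] {x₀ : X} {n : ℕ}
    (hn : 0 < n) (hper : f^[n] x₀ = x₀) :
    IsMinimalSet f (Set.range fun i : ℕ => f^[i] x₀) := by
  have hfin : (Set.range fun i : ℕ => f^[i] x₀).Finite := by
    apply Set.Finite.subset ((Set.finite_Iio n).image (fun i => f^[i] x₀))
    rintro - ⟨s, rfl⟩
    exact ⟨s % n, Nat.mod_lt _ hn, (iterate_periodic_mod hn hper s).symm⟩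
  refine ⟨⟨x₀, 0, rfl⟩, hfin.isClosed, ?_, ?_⟩
  · rintro - ⟨-, ⟨i, rfl⟩, rfl⟩
    exact ⟨i + 1, by simpa using Function.iterate_succ_apply' f i x₀⟩
  · intro M' hM'sub hM'ne hM'cl hM'inv
    obtain ⟨y, hy⟩ := hM'ne
    obtain ⟨i, rfl⟩ := hM'sub hy
    have hstep : ∀ k, f^[i + k] x₀ ∈ M' := by
      intro k
      induction k with
      | zero => simpa using hy
      | succ k ih =>
          have e : f^[i + (k + 1)] x₀ = f (f^[i + k] x₀) := by
            have e2 : i + (k + 1) = (i + k) + 1 := by omega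
            rw [e2, Function.iterate_succ_apply']
          rw [e]
          exact hM'inv ⟨_, ih, rfl⟩
    apply subset_antisymm hM'sub
    rintro - ⟨s, rfl⟩
    show f^[s] x₀ ∈ M'
    have hin : i ≤ i * n := Nat.le_mul_of_pos_right i hn
    have e : f^[s] x₀ = f^[i + (s + i * n - i)] x₀ := by
      have e2 : i + (s + i * n - i) = s + i * n := by omega
      rw [e2, iterate_periodic_add_mul hper]
    rw [e]
    exact hstep _

lemma ncard_biUnion_le {α ι : Type*} [Finite α] (s : Finset ι) (A : ι → Set α) :
    (⋃ i ∈ s, A i).ncard ≤ ∑ i ∈ s, (A i).ncard := by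
  classical
  induction s using Finset.induction_on with
  | empty => simp
  | @insert a s' ha ih =>
      rw [Finset.set_biUnion_insert, Finset.sum_insert ha]
      exact le_trans (Set.ncard_union_le _ _) (Nat.add_le_add_left ih _)

end Aux


/-- If `W` locally divides `H` and contains every minimal set contained in the core, then
there is `β < log m` bounding the virtual entropy of every periodic orbit contained in the
domain `D(H)` but not contained in `W`. -/
theorem virtualEntropy_periodic_orbit_bound [MetricSpace X] [CompactSpace X]
    {f : X → X} (hf : Continuous f) {m : ℕ} (hm : 1 ≤ m) {H : Fin m → Set X}
    (hH : IsClosedShiftSystem f H) {W : Set X} (hdiv : LocallyDivides f H W)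
    (hmin : ∀ M : Set X, IsMinimalSet f M → M ⊆ coreSet f H → M ⊆ W) :
    ∃ β : ℝ, β < Real.log m ∧
      ∀ P : Set X, IsPeriodicOrbit f P → P ⊆ domainSet f H → ¬ P ⊆ W →
        virtualEntropy f H P ≤ (β : EReal) := by
  classical
  obtain ⟨hWinv, hWne, Λ, hΛcl, hΛinv, hΛent, V₀, hV₀, hcond₀⟩ := hdiv
  obtain ⟨V, hVopen, hWV, hVV₀⟩ := mem_nhdsSet_iff_exists.1 hV₀
  have hcond : ∀ (x : X) (n : ℕ), 1 ≤ n → (∀ i < n, f^[i] x ∈ V \ W) →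
      itinN f H n x ⊆ initWords Λ n := by
    intro x n hn h
    exact hcond₀ x n hn (fun i hi => ⟨hVV₀ (h i hi).1, (h i hi).2⟩)
  rcases Nat.lt_or_ge m 2 with hm1 | hm2
  · -- the case `m = 1` is vacuous: a periodic orbit in the domain lies in the core
    have hm' : m = 1 := by omega
    subst hm'
    refine ⟨-1, by norm_num, ?_⟩
    intro P hP hPD hPW
    exfalso
    obtain ⟨x₀, n, hn, hper, rfl⟩ := hP
    apply hPW
    apply hmin _ (Aux.periodic_isMinimalSet hn hper)
    rintro - ⟨s, rfl⟩
    show f^[s] x₀ ∈ coreSet f H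
    refine Set.mem_iInter.2 fun k => ?_
    have hd : f^[s] x₀ ∈ domainSet f H := hPD ⟨s, rfl⟩
    have hk := Set.mem_iInter.1 hd k
    show f^[k] (f^[s] x₀) ∈ centerSet H
    obtain ⟨-, ⟨j, rfl⟩, hj⟩ := hk
    refine Set.mem_iInter.2 fun i => ?_
    have e : i = j := Subsingleton.elim i j
    rw [e]; exact hj
  · -- main case: `m ≥ 2`
    obtain ⟨n₁, hn₁, hwords⟩ := Aux.exists_notfull_initWords (by omega) hΛcl hΛent
    obtain ⟨L₀, B, hL₀, hB1, hBlt, hwin⟩ :=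
      Aux.exists_window_bound hf hm2 hH.2 hVopen hWV hmin hcond hn₁ hwords
    set γ := Real.log B / L₀ with hγdef
    have hγ : γ < Real.log m := by
      have h1 : Real.log B < L₀ * Real.log m := by
        calc Real.log B < Real.log ((m : ℝ) ^ L₀) := by
              apply Real.log_lt_log (by exact_mod_cast hB1)
              exact_mod_cast hBlt
          _ = L₀ * Real.log m := by rw [Real.log_pow]
      rw [hγdef, div_lt_iff₀ (by positivity)]
      linarith
    refine ⟨(γ + Real.log m) / 2, by linarith, ?_⟩
    intro P hP hPD hPW
    obtain ⟨x₀, n, hn, hper, rfl⟩ := hP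
    have hGood : ∀ t : ℕ, f^[t] x₀ ∉ W := Aux.periodic_avoids_W hWinv hn hper hPW
    have hcount : ∀ L, (initWords (itinSet f H (Set.range fun i : ℕ => f^[i] x₀)) L).ncard
        ≤ (n * m ^ L₀) * B ^ (L / L₀) := by
      intro L
      have hsub : initWords (itinSet f H (Set.range fun i : ℕ => f^[i] x₀)) L ⊆
          ⋃ t ∈ Finset.range n, itinN f H L (f^[t] x₀) := by
        rintro - ⟨a, ha, rfl⟩
        simp only [itinSet, Set.mem_iUnion] at ha
        obtain ⟨x, ⟨s, rfl⟩, hax⟩ := ha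
        refine Set.mem_biUnion (Finset.mem_range.2 (Nat.mod_lt s hn)) ?_
        intro i
        have h2 := hax (i : ℕ)
        show f^[(i : ℕ)] (f^[s % n] x₀) ∈ H _
        have e : f^[(i : ℕ)] (f^[s % n] x₀) = f^[(i : ℕ)] (f^[s] x₀) := by
          rw [← Aux.iterate_periodic_mod hn hper s]
        rw [e]
        exact h2
      calc (initWords (itinSet f H (Set.range fun i : ℕ => f^[i] x₀)) L).ncard
          ≤ (⋃ t ∈ Finset.range n, itinN f H L (f^[t] x₀)).ncard :=
            Set.ncard_le_ncard hsub (Set.toFinite _)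
        _ ≤ ∑ t ∈ Finset.range n, (itinN f H L (f^[t] x₀)).ncard := Aux.ncard_biUnion_le _ _
        _ ≤ ∑ _t ∈ Finset.range n, B ^ (L / L₀) * m ^ L₀ := by
            refine Finset.sum_le_sum fun t _ => ?_
            have hwt : ∀ t' : ℕ, Nat.card (itinN f H L₀ (f^[t'] (f^[t] x₀))) ≤ B := by
              intro t'
              apply hwin
              intro j
              rw [← Function.iterate_add_apply, ← Function.iterate_add_apply]
              exact hGood _
            have hcw := Aux.card_itinN_window (by omega) hL₀ (f^[t] x₀) hwt L
            calc (itinN f H L (f^[t] x₀)).ncard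
                = Nat.card (itinN f H L (f^[t] x₀)) := (Nat.card_coe_set_eq _).symm
              _ ≤ B ^ (L / L₀) * m ^ L₀ := hcw
        _ = (n * m ^ L₀) * B ^ (L / L₀) := by
            rw [Finset.sum_const, Finset.card_range, smul_eq_mul]
            ring
    have hK1 : 1 ≤ n * m ^ L₀ :=
      Nat.one_le_iff_ne_zero.2 (Nat.mul_ne_zero (by omega) (pow_ne_zero _ (by omega)))
    show coverEntropy (shiftMap m) (itinSet f H (Set.range fun i : ℕ => f^[i] x₀)) ≤ _
    exact Aux.coverEntropy_le_of_initWords_card hm hK1 hB1 hL₀ hcount (by linarith)
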